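/- Let a, \tau \in [0,1] with a \le \tau \le 1/2. Suppose h and f are nonnegative, non-decreasing functions on [0,1], and f is constant on [a,1]. Then \int_\tau^1 h(x)(f(x)-f(x-\tau))^2 dx \le 2a \int_0^1 h(x) f(x)^2 dx. -/

import Mathlib

open MeasureTheory Set

/-- Chebyshev association inequality on an interval: if `g` is non-decreasing and `k` is
non-increasing on `[c,d]`, then `(d-c) ∫ g k ≤ (∫ g)(∫ k)`. -/
lemma cheb_assoc (c d : ℝ) (hcd : c ≤ d) (g k : ℝ → ℝ)
    (hg : MonotoneOn g (Set.Icc c d)) (hk : AntitoneOn k (Set.Icc c d)) :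
    (d - c) * ∫ x in Set.Icc c d, g x * k x ≤
      (∫ x in Set.Icc c d, g x) * (∫ x in Set.Icc c d, k x) := by
  set s := Set.Icc c d with hs
  have hms : MeasurableSet s := measurableSet_Icc
  have hvol : (volume s).toReal = d - c := by
    rw [hs, Real.volume_Icc, ENNReal.toReal_ofReal (by linarith)]
  have hvolne : volume s ≠ ⊤ := by rw [hs, Real.volume_Icc]; exact ENNReal.ofReal_ne_top
  have Ig : IntegrableOn g s := hg.integrableOn_isCompact isCompact_Icc
  have Ik : IntegrableOn k s := AntitoneOn.integrableOn_isCompact isCompact_Icc hk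
  have hgbd : ∀ x ∈ s, ‖g x‖ ≤ max ‖g c‖ ‖g d‖ := by
    intro x hx
    exact abs_le_max_abs_abs (hg ⟨le_rfl, hcd⟩ hx hx.1) (hg hx ⟨hcd, le_rfl⟩ hx.2)
  have Igk : IntegrableOn (fun x => g x * k x) s :=
    Ik.bdd_mul (aemeasurable_restrict_of_monotoneOn hms hg).aestronglyMeasurable
      ((ae_restrict_iff' hms).mpr (ae_of_all _ hgbd))
  set C := ∫ x in s, g x * k x with hC
  set G := ∫ x in s, g x with hG
  set K := ∫ x in s, k x with hK
  have expand : ∀ y ∈ s, (∫ x in s, (g x - g y) * (k x - k y)) =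
      C - G * k y - g y * K + (d - c) * (g y * k y) := by
    intro y hy
    have h1 : IntegrableOn (fun x => g x * k y) s := Ig.mul_const _
    have h2 : IntegrableOn (fun x => g y * k x) s := Ik.const_mul _
    have h3 : IntegrableOn (fun _ : ℝ => g y * k y) s :=
      integrableOn_const hvolne
    have heq : (fun x => (g x - g y) * (k x - k y)) =
        fun x => g x * k x - g x * k y - g y * k x + g y * k y := by
      funext x; ring
    have e1 : ∫ x in s, (g x * k x - g x * k y - g y * k x + g y * k y) =
        (∫ x in s, (g x * k x - g x * k y - g y * k x)) + ∫ _x in s, g y * k y :=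
      integral_add ((Igk.sub h1).sub h2) h3
    have e2 : ∫ x in s, (g x * k x - g x * k y - g y * k x) =
        (∫ x in s, (g x * k x - g x * k y)) - ∫ x in s, g y * k x :=
      integral_sub (Igk.sub h1) h2
    have e3 : ∫ x in s, (g x * k x - g x * k y) =
        (∫ x in s, g x * k x) - ∫ x in s, g x * k y := integral_sub Igk h1
    have e4 : ∫ x in s, g x * k y = (∫ x in s, g x) * k y := integral_mul_const _ _
    have e5 : ∫ x in s, g y * k x = g y * ∫ x in s, k x := integral_const_mul _ _
    have e6 : ∫ _x in s, g y * k y = (volume s).toReal • (g y * k y) := setIntegral_const _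
    rw [heq, e1, e2, e3, e4, e5, e6, hvol, smul_eq_mul]
  have nonpos : ∀ y ∈ s, (∫ x in s, (g x - g y) * (k x - k y)) ≤ 0 := by
    intro y hy
    apply setIntegral_nonpos hms
    intro x hx
    rcases le_total x y with hxy | hxy
    · exact mul_nonpos_of_nonpos_of_nonneg (sub_nonpos.2 (hg hx hy hxy))
        (sub_nonneg.2 (hk hx hy hxy))
    · exact mul_nonpos_of_nonneg_of_nonpos (sub_nonneg.2 (hg hy hx hxy))
        (sub_nonpos.2 (hk hy hx hxy))
  have main : ∫ y in s, (C - G * k y - g y * K + (d - c) * (g y * k y)) ≤ 0 := by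
    calc ∫ y in s, (C - G * k y - g y * K + (d - c) * (g y * k y))
        = ∫ y in s, (∫ x in s, (g x - g y) * (k x - k y)) :=
          setIntegral_congr_fun hms (fun y hy => (expand y hy).symm)
      _ ≤ 0 := setIntegral_nonpos hms nonpos
  have comp : ∫ y in s, (C - G * k y - g y * K + (d - c) * (g y * k y)) =
      (d - c) * C - G * K - G * K + (d - c) * C := by
    have hC' : IntegrableOn (fun _ : ℝ => C) s := integrableOn_const hvolne
    have h1 : IntegrableOn (fun y => G * k y) s := Ik.const_mul _
    have h2 : IntegrableOn (fun y => g y * K) s := Ig.mul_const _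
    have h3 : IntegrableOn (fun y => (d - c) * (g y * k y)) s := Igk.const_mul _
    have e1 : ∫ y in s, (C - G * k y - g y * K + (d - c) * (g y * k y)) =
        (∫ y in s, (C - G * k y - g y * K)) + ∫ y in s, (d - c) * (g y * k y) :=
      integral_add ((hC'.sub h1).sub h2) h3
    have e2 : ∫ y in s, (C - G * k y - g y * K) =
        (∫ y in s, (C - G * k y)) - ∫ y in s, g y * K :=
      integral_sub (hC'.sub h1) h2
    have e3 : ∫ y in s, (C - G * k y) = (∫ _y in s, C) - ∫ y in s, G * k y :=
      integral_sub hC' h1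
    have e4 : ∫ _y in s, C = (volume s).toReal • C := setIntegral_const _
    have e5 : ∫ y in s, G * k y = G * ∫ y in s, k y := integral_const_mul _ _
    have e6 : ∫ y in s, g y * K = (∫ y in s, g y) * K := integral_mul_const _ _
    have e7 : ∫ y in s, (d - c) * (g y * k y) = (d - c) * ∫ y in s, g y * k y :=
      integral_const_mul _ _
    rw [e1, e2, e3, e4, e5, e6, e7, hvol, smul_eq_mul]
  rw [comp] at main
  linarith

/-- Lemma (uniform variable shift bound, case `a ≤ τ ≤ 1/2`): for `h, f` nonnegative and
non-decreasing on `[0,1]` with `f` constant on `[a,1]`,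
`∫_τ^1 h(x)(f(x)-f(x-τ))² dx ≤ 2a ∫_0^1 h(x) f(x)² dx`. -/
theorem shift_bound_a_le_tau (a τ : ℝ) (ha : a ∈ Set.Icc (0:ℝ) 1) (hτ : τ ∈ Set.Icc (0:ℝ) 1)
    (haτ : a ≤ τ) (hτhalf : τ ≤ 1 / 2) (h f : ℝ → ℝ)
    (hh0 : ∀ x ∈ Set.Icc (0:ℝ) 1, 0 ≤ h x) (hf0 : ∀ x ∈ Set.Icc (0:ℝ) 1, 0 ≤ f x)
    (hhm : MonotoneOn h (Set.Icc (0:ℝ) 1)) (hfm : MonotoneOn f (Set.Icc (0:ℝ) 1))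
    (hconst : ∀ x ∈ Set.Icc a 1, f x = f a) :
    ∫ x in Set.Icc τ 1, h x * (f x - f (x - τ)) ^ 2 ≤
      2 * a * ∫ x in Set.Icc (0:ℝ) 1, h x * f x ^ 2 := by
  obtain ⟨ha0, ha1⟩ := ha
  obtain ⟨hτ0, hτ1⟩ := hτ
  set k : ℝ → ℝ := fun x => (f a - f (x - τ)) ^ 2 with hk
  have hsub : Set.Icc τ 1 ⊆ Set.Icc (0:ℝ) 1 := Set.Icc_subset_Icc hτ0 le_rfl
  have hsub' : Set.Icc a 1 ⊆ Set.Icc (0:ℝ) 1 := Set.Icc_subset_Icc ha0 le_rfl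
  have hfle : ∀ z ∈ Set.Icc (0:ℝ) 1, f z ≤ f a := by
    intro z hz
    rcases le_total z a with hza | haz
    · exact hfm hz ⟨ha0, ha1⟩ hza
    · exact (hconst z ⟨haz, hz.2⟩).le
  have hmemz : ∀ x ∈ Set.Icc τ 1, x - τ ∈ Set.Icc (0:ℝ) 1 := by
    intro x hx
    exact ⟨by linarith [hx.1], by linarith [hx.2]⟩
  have hkanti : AntitoneOn k (Set.Icc τ 1) := by
    intro x hx y hy hxy
    have h1 := hfm (hmemz x hx) (hmemz y hy) (by linarith)
    have h2 := hfle _ (hmemz y hy)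
    have h3 := hfle _ (hmemz x hx)
    simp only [hk]
    nlinarith
  have step1 : ∫ x in Set.Icc τ 1, h x * (f x - f (x - τ)) ^ 2 =
      ∫ x in Set.Icc τ 1, h x * k x :=
    setIntegral_congr_fun measurableSet_Icc
      (fun x hx => by rw [hconst x ⟨le_trans haτ hx.1, hx.2⟩])
  have cheb := cheb_assoc τ 1 hτ1 h k (hhm.mono hsub) hkanti
  -- bound on ∫ k
  have Ik : IntegrableOn k (Set.Icc τ 1) := AntitoneOn.integrableOn_isCompact isCompact_Icc hkanti
  have hKbd : (∫ x in Set.Icc τ 1, k x) ≤ a * (f a) ^ 2 := by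
    have Iind : IntegrableOn ((Set.Icc τ (τ + a)).indicator fun _ => (f a) ^ 2)
        (Set.Icc τ 1) :=
      (integrableOn_const (by rw [Real.volume_Icc]; exact ENNReal.ofReal_ne_top)).indicator
        measurableSet_Icc
    have hbd : ∀ x ∈ Set.Icc τ 1,
        k x ≤ (Set.Icc τ (τ + a)).indicator (fun _ => (f a) ^ 2) x := by
      intro x hx
      by_cases hxm : x ∈ Set.Icc τ (τ + a)
      · rw [Set.indicator_of_mem hxm]
        have h1 := hf0 _ (hmemz x hx)
        have h2 := hfle _ (hmemz x hx)
        simp only [hk]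
        nlinarith
      · rw [Set.indicator_of_notMem hxm]
        have hxa : τ + a < x := by
          rcases not_and_or.1 hxm with h' | h'
          · exact absurd hx.1 h'
          · push_neg at h'; exact h'
        have : f (x - τ) = f a := hconst _ ⟨by linarith, by linarith [hx.2]⟩
        simp [hk, this]
    calc (∫ x in Set.Icc τ 1, k x)
        ≤ ∫ x in Set.Icc τ 1, (Set.Icc τ (τ + a)).indicator (fun _ => (f a) ^ 2) x :=
          setIntegral_mono_on Ik Iind measurableSet_Icc hbd
      _ = ∫ _x in Set.Icc τ 1 ∩ Set.Icc τ (τ + a), (f a) ^ 2 :=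
          setIntegral_indicator measurableSet_Icc
      _ = (volume (Set.Icc τ (min 1 (τ + a)))).toReal * (f a) ^ 2 := by
          rw [Set.Icc_inter_Icc, setIntegral_const, smul_eq_mul, max_self, measureReal_def]
      _ ≤ a * (f a) ^ 2 := by
          rw [Real.volume_Icc, ENNReal.toReal_ofReal (by simp; constructor <;> linarith)]
          have : min 1 (τ + a) - τ ≤ a := by
            have := min_le_right 1 (τ + a); linarith
          exact mul_le_mul_of_nonneg_right this (sq_nonneg _)
  have hK0 : 0 ≤ ∫ x in Set.Icc τ 1, k x :=
    setIntegral_nonneg measurableSet_Icc (fun x _ => sq_nonneg _)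
  have hG0 : 0 ≤ ∫ x in Set.Icc τ 1, h x :=
    setIntegral_nonneg measurableSet_Icc (fun x hx => hh0 x (hsub hx))
  have hGa0 : 0 ≤ ∫ x in Set.Icc a 1, h x :=
    setIntegral_nonneg measurableSet_Icc (fun x hx => hh0 x (hsub' hx))
  have hGle : (∫ x in Set.Icc τ 1, h x) ≤ ∫ x in Set.Icc a 1, h x :=
    setIntegral_mono_set ((hhm.mono hsub').integrableOn_isCompact isCompact_Icc)
      ((ae_restrict_iff' measurableSet_Icc).2 (ae_of_all _ fun x hx => hh0 x (hsub' hx)))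
      (HasSubset.Subset.eventuallyLE (Set.Icc_subset_Icc haτ le_rfl))
  have hX0 : 0 ≤ ∫ x in Set.Icc τ 1, h x * k x :=
    setIntegral_nonneg measurableSet_Icc
      (fun x hx => mul_nonneg (hh0 x (hsub hx)) (sq_nonneg _))
  have Ihf : IntegrableOn (fun x => h x * f x ^ 2) (Set.Icc (0:ℝ) 1) := by
    have hm : MonotoneOn (fun x => h x * f x ^ 2) (Set.Icc (0:ℝ) 1) := by
      intro x hx y hy hxy
      exact mul_le_mul (hhm hx hy hxy)
        (pow_le_pow_left₀ (hf0 x hx) (hfm hx hy hxy) 2)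
        (pow_nonneg (hf0 x hx) 2) (hh0 y hy)
    exact hm.integrableOn_isCompact isCompact_Icc
  have hE : (f a) ^ 2 * (∫ x in Set.Icc a 1, h x) ≤
      ∫ x in Set.Icc (0:ℝ) 1, h x * f x ^ 2 := by
    have e1 : (f a) ^ 2 * (∫ x in Set.Icc a 1, h x) = ∫ x in Set.Icc a 1, h x * f x ^ 2 := by
      rw [← integral_const_mul]
      exact setIntegral_congr_fun measurableSet_Icc (fun x hx => by rw [hconst x hx]; ring)
    rw [e1]
    exact setIntegral_mono_set Ihf
      ((ae_restrict_iff' measurableSet_Icc).2 (ae_of_all _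
        (fun x hx => mul_nonneg (hh0 x hx) (sq_nonneg _))))
      (HasSubset.Subset.eventuallyLE hsub')
  rw [step1]
  nlinarith [mul_le_mul hGle hKbd hK0 hGa0, mul_le_mul_of_nonneg_left hE ha0]
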